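/- For every permutation (i,j,k) of (1,2,3) with signature ε_{ijk}, the stress-free strains satisfy the habit-plane relation (1/3) e^{(i)} + (2/3) e^{(j)} = 2 ε_{ijk} (b_{jk} ⊙ b_{kj}); i.e., the convex combination with weights 1/3 and 2/3 of two distinct martensitic variant strains is a symmetrized rank-one matrix, and hence compatible with the austenite strain e^{(0)} = 0. -/

import Mathlib

noncomputable section

open MeasureTheory Metric Set

/-- ℝ³ as a Euclidean space. -/
abbrev E3 : Type := EuclideanSpace ℝ (Fin 3)

/-- Construct a vector of ℝ³ from its three coordinates. -/
def v3 (x y z : ℝ) : E3 := WithLp.toLp 2 ![x, y, z]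

/-- The Euclidean dot product on ℝ³. -/
def dot3 (u v : E3) : ℝ := ∑ i : Fin 3, u i * v i

/-- The cross product on ℝ³. -/
def cross3 (u v : E3) : E3 :=
  v3 (u 1 * v 2 - u 2 * v 1) (u 2 * v 0 - u 0 * v 2) (u 0 * v 1 - u 1 * v 0)

/-- Divergence of a vector field on ℝ³. -/
def divg (φ : E3 → E3) (x : E3) : ℝ :=
  ∑ i : Fin 3, fderiv ℝ φ x (EuclideanSpace.single i 1) i

/-- The set of test values defining the total variation of `χ` on `Ω`:
values `∫_Ω χ div φ` for `φ` a C¹ vector field compactly supported in `Ω` with `‖φ‖ ≤ 1`. -/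
def tvSet (Ω : Set E3) (χ : E3 → ℝ) : Set ℝ :=
  {v : ℝ | ∃ φ : E3 → E3, ContDiff ℝ 1 φ ∧ HasCompactSupport φ ∧ tsupport φ ⊆ Ω ∧
      (∀ x, ‖φ x‖ ≤ 1) ∧ v = ∫ x in Ω, χ x * divg φ x}

/-- The total variation `∫_Ω |∇χ|`. -/
def totalVariation (Ω : Set E3) (χ : E3 → ℝ) : ℝ := sSup (tvSet Ω χ)

/-- `χ ∈ BV(Ω, {0,1})`. -/
def IsBVIndicator (Ω : Set E3) (χ : E3 → ℝ) : Prop :=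
  Measurable χ ∧ (∀ x, χ x = 0 ∨ χ x = 1) ∧ BddAbove (tvSet Ω χ)

/-- An admissible phase indicator `χ = (χ₁, χ₂, χ₃)`:
each `χᵢ ∈ BV(Ω, {0,1})` and `χ₁ + χ₂ + χ₃ ≤ 1`. -/
def AdmissiblePhase (Ω : Set E3) (χ : Fin 3 → E3 → ℝ) : Prop :=
  (∀ i, IsBVIndicator Ω (χ i)) ∧ ∀ x, χ 0 x + χ 1 x + χ 2 x ≤ 1

/-- The volume `V = ∫_Ω (χ₁ + χ₂ + χ₃)` of the martensitic inclusion. -/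
def phaseVolume (Ω : Set E3) (χ : Fin 3 → E3 → ℝ) : ℝ :=
  ∫ x in Ω, (χ 0 x + χ 1 x + χ 2 x)

/-- Squared Frobenius norm of a 3×3 matrix. -/
def frobSq (A : Matrix (Fin 3) (Fin 3) ℝ) : ℝ := ∑ i : Fin 3, ∑ j : Fin 3, (A i j) ^ 2

/-- Symmetric part `e(A) = (A + Aᵀ)/2` of a matrix. -/
def matSym (A : Matrix (Fin 3) (Fin 3) ℝ) : Matrix (Fin 3) (Fin 3) ℝ :=
  (2⁻¹ : ℝ) • (A + A.transpose)

/-- The symmetrized gradient `e(u) = (∇u + ∇uᵀ)/2` of a displacement `u`. -/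
def symGrad (u : E3 → E3) (x : E3) : Matrix (Fin 3) (Fin 3) ℝ :=
  Matrix.of fun i j =>
    (fderiv ℝ u x (EuclideanSpace.single j 1) i + fderiv ℝ u x (EuclideanSpace.single i 1) j) / 2

/-- Stress-free strain of the first martensite variant. -/
def em1 : Matrix (Fin 3) (Fin 3) ℝ := Matrix.diagonal ![-2, 1, 1]

/-- Stress-free strain of the second martensite variant. -/
def em2 : Matrix (Fin 3) (Fin 3) ℝ := Matrix.diagonal ![1, -2, 1]

/-- Stress-free strain of the third martensite variant. -/
def em3 : Matrix (Fin 3) (Fin 3) ℝ := Matrix.diagonal ![1, 1, -2]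

/-- The three stress-free strains of martensite. -/
def strains : Fin 3 → Matrix (Fin 3) (Fin 3) ℝ := ![em1, em2, em3]

/-- `Σᵢ χᵢ e⁽ⁱ⁾`. -/
def phaseStrain (χ : Fin 3 → E3 → ℝ) (x : E3) : Matrix (Fin 3) (Fin 3) ℝ :=
  ∑ i : Fin 3, χ i x • strains i

/-- A (Sobolev-type) admissibility class for displacements: `u` and `∇u` are square
integrable on `Ω` and `u` is a.e. differentiable. Stands in for `H¹(Ω, ℝ³)`. -/
def IsH1 (Ω : Set E3) (u : E3 → E3) : Prop :=
  AEStronglyMeasurable u (volume.restrict Ω) ∧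
  (∀ᵐ x ∂(volume.restrict Ω), DifferentiableAt ℝ u x) ∧
  IntegrableOn (fun x => ‖u x‖ ^ 2) Ω ∧
  IntegrableOn (fun x => ‖fderiv ℝ u x‖ ^ 2) Ω

/-- The elastic integral `∫_Ω |e(u) − Σᵢ χᵢ e⁽ⁱ⁾|² dx`. -/
def elasticIntegral (Ω : Set E3) (χ : Fin 3 → E3 → ℝ) (u : E3 → E3) : ℝ :=
  ∫ x in Ω, frobSq (symGrad u x - phaseStrain χ x)

/-- The interfacial energy `E_interf[χ] = Σᵢ ∫_Ω |∇χᵢ|`. -/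
def interfEnergy (Ω : Set E3) (χ : Fin 3 → E3 → ℝ) : ℝ :=
  ∑ i : Fin 3, totalVariation Ω (χ i)

/-- The elastic energy `E_elast[χ] = inf_{u ∈ H¹} ∫_Ω |e(u) − Σᵢ χᵢ e⁽ⁱ⁾|² dx`. -/
def elastEnergy (Ω : Set E3) (χ : Fin 3 → E3 → ℝ) : ℝ :=
  sInf {v : ℝ | ∃ u : E3 → E3, IsH1 Ω u ∧ v = elasticIntegral Ω χ u}

/-- The total energy `E[χ] = E_interf[χ] + E_elast[χ]`. -/
def totalEnergy (Ω : Set E3) (χ : Fin 3 → E3 → ℝ) : ℝ :=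
  interfEnergy Ω χ + elastEnergy Ω χ

/-- Twin/habit plane normals. -/
def nb12 : E3 := v3 (1 / Real.sqrt 2) (1 / Real.sqrt 2) 0
def nb21 : E3 := v3 (-(1 / Real.sqrt 2)) (1 / Real.sqrt 2) 0
def nb31 : E3 := v3 (1 / Real.sqrt 2) 0 (1 / Real.sqrt 2)
def nb13 : E3 := v3 (1 / Real.sqrt 2) 0 (-(1 / Real.sqrt 2))
def nb23 : E3 := v3 0 (1 / Real.sqrt 2) (1 / Real.sqrt 2)
def nb32 : E3 := v3 0 (-(1 / Real.sqrt 2)) (1 / Real.sqrt 2)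

/-- The corner domain `Ω = {αa + βb + γc : α, β, γ ≥ 0}`. -/
def corner (a b c : E3) : Set E3 :=
  {x | ∃ α β γ : ℝ, 0 ≤ α ∧ 0 ≤ β ∧ 0 ≤ γ ∧ x = α • a + β • b + γ • c}

/-- A generic corner: `a, b, c` are unit vectors in positive order such that the habit
plane normal `n = b₂₃` cuts off the corner (`a·n, b·n, c·n > 0`). -/
def GenericCorner (a b c : E3) : Prop :=
  ‖a‖ = 1 ∧ ‖b‖ = 1 ∧ ‖c‖ = 1 ∧
  0 < dot3 (cross3 a b) c ∧ 0 < dot3 (cross3 b c) a ∧ 0 < dot3 (cross3 c a) b ∧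
  0 < dot3 a nb23 ∧ 0 < dot3 b nb23 ∧ 0 < dot3 c nb23

/-- The parameter `μ` of the corner. -/
def cornerMu (a b c : E3) : ℝ :=
  min (dot3 (‖cross3 a b‖⁻¹ • cross3 a b) c)
    (min (dot3 (‖cross3 b c‖⁻¹ • cross3 b c) a) (dot3 (‖cross3 c a‖⁻¹ • cross3 c a) b))

/-- `b₃ = (b₂₁ × b₃₂)/|b₂₁ × b₃₂|`. -/
def bb3v : E3 := ‖cross3 nb21 nb32‖⁻¹ • cross3 nb21 nb32

/-- `b₂ = (b₃₂ × b₃)/|b₃₂ × b₃|`. -/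
def bb2v : E3 := ‖cross3 nb32 bb3v‖⁻¹ • cross3 nb32 bb3v

/-- `b₁ = (b₃ × b₂₁)/|b₃ × b₂₁|`. -/
def bb1v : E3 := ‖cross3 bb3v nb21‖⁻¹ • cross3 bb3v nb21

/-- The coordinates `yᵢ = x·bᵢ`. -/
def ycoord (i : Fin 3) (x : E3) : ℝ := dot3 x (![bb1v, bb2v, bb3v] i)

/-- The box `C_R = {−R ≤ y₁ ≤ R, 0 ≤ y₂ ≤ R, 0 ≤ y₃ ≤ R}`. -/
def CRset (R : ℝ) : Set E3 :=
  {x | -R ≤ ycoord 0 x ∧ ycoord 0 x ≤ R ∧ 0 ≤ ycoord 1 x ∧ ycoord 1 x ≤ R ∧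
       0 ≤ ycoord 2 x ∧ ycoord 2 x ≤ R}

/-- `C_R⁻ = C_R ∩ {y₁ ≤ 0}`. -/
def CRminus (R : ℝ) : Set E3 := CRset R ∩ {x | ycoord 0 x ≤ 0}

/-- `C_R⁺ = C_R ∩ {y₁ > 0}`. -/
def CRplus (R : ℝ) : Set E3 := CRset R ∩ {x | 0 < ycoord 0 x}

/-- Matrices of the upper-bound construction. -/
def D1 : Matrix (Fin 3) (Fin 3) ℝ := Matrix.of ![![-2, 2, 0], ![-2, 1, 1], ![0, -1, 1]]
def D2 : Matrix (Fin 3) (Fin 3) ℝ := Matrix.of ![![1, -1, 0], ![1, -2, 1], ![0, -1, 1]]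
def DM : Matrix (Fin 3) (Fin 3) ℝ := Matrix.of ![![0, 0, 0], ![0, -1, 1], ![0, -1, 1]]

/-- Tensor product `u ⊗ v` of two vectors. -/
def outer (u v : E3) : Matrix (Fin 3) (Fin 3) ℝ := Matrix.of fun i j => u i * v j

/-- Symmetrized tensor product `u ⊙ v = (u⊗v + v⊗u)/2`. -/
def symOuter (u v : E3) : Matrix (Fin 3) (Fin 3) ℝ := (2⁻¹ : ℝ) • (outer u v + outer v u)


/-- The twin/habit-plane normals `b_{ij}` (`i ≠ j`); the diagonal entries are unused. -/
def twinNormal : Fin 3 → Fin 3 → E3 := ![![0, nb12, nb13], ![nb21, 0, nb23], ![nb31, nb32, 0]]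


lemma symOuter_smul_left (c : ℝ) (u v : E3) :
    symOuter (c • u) v = c • symOuter u v := by
  ext i j
  simp [symOuter, outer, Matrix.smul_apply]
  ring

lemma sqrt2_mul : (Real.sqrt 2)⁻¹ * (Real.sqrt 2)⁻¹ = (2:ℝ)⁻¹ := by
  rw [← mul_inv, Real.mul_self_sqrt (by norm_num)]

lemma perm3_cases (σ : Equiv.Perm (Fin 3)) :
    σ = 1 ∨ σ = Equiv.swap 0 1 ∨ σ = Equiv.swap 0 2 ∨ σ = Equiv.swap 1 2 ∨
    σ = Equiv.swap 0 1 * Equiv.swap 1 2 ∨ σ = Equiv.swap 0 2 * Equiv.swap 1 2 := by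
  revert σ; decide

lemma Lcase0 : (3 : ℝ)⁻¹ • strains 0 + (2 / 3 : ℝ) • strains 1 =
    ((2 : ℝ) * 1) • symOuter (twinNormal 1 2) (twinNormal 2 1) := by
  ext i j
  fin_cases i <;> fin_cases j <;>
    simp [strains, em1, em2, em3, twinNormal, symOuter, outer, nb12, nb21, nb13,
      nb31, nb23, nb32, v3, Matrix.smul_apply, Matrix.diagonal, Matrix.of_apply] <;>
    nlinarith [sqrt2_mul]

lemma Lcase1 : (3 : ℝ)⁻¹ • strains 1 + (2 / 3 : ℝ) • strains 0 =
    ((2 : ℝ) * (-1)) • symOuter (twinNormal 0 2) (twinNormal 2 0) := by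
  ext i j
  fin_cases i <;> fin_cases j <;>
    simp [strains, em1, em2, em3, twinNormal, symOuter, outer, nb12, nb21, nb13,
      nb31, nb23, nb32, v3, Matrix.smul_apply, Matrix.diagonal, Matrix.of_apply] <;>
    nlinarith [sqrt2_mul]

lemma Lcase2 : (3 : ℝ)⁻¹ • strains 2 + (2 / 3 : ℝ) • strains 1 =
    ((2 : ℝ) * (-1)) • symOuter (twinNormal 1 0) (twinNormal 0 1) := by
  ext i j
  fin_cases i <;> fin_cases j <;>
    simp [strains, em1, em2, em3, twinNormal, symOuter, outer, nb12, nb21, nb13,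
      nb31, nb23, nb32, v3, Matrix.smul_apply, Matrix.diagonal, Matrix.of_apply] <;>
    nlinarith [sqrt2_mul]

lemma Lcase3 : (3 : ℝ)⁻¹ • strains 0 + (2 / 3 : ℝ) • strains 2 =
    ((2 : ℝ) * (-1)) • symOuter (twinNormal 2 1) (twinNormal 1 2) := by
  ext i j
  fin_cases i <;> fin_cases j <;>
    simp [strains, em1, em2, em3, twinNormal, symOuter, outer, nb12, nb21, nb13,
      nb31, nb23, nb32, v3, Matrix.smul_apply, Matrix.diagonal, Matrix.of_apply] <;>
    nlinarith [sqrt2_mul]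

lemma Lcase4 : (3 : ℝ)⁻¹ • strains 1 + (2 / 3 : ℝ) • strains 2 =
    ((2 : ℝ) * 1) • symOuter (twinNormal 2 0) (twinNormal 0 2) := by
  ext i j
  fin_cases i <;> fin_cases j <;>
    simp [strains, em1, em2, em3, twinNormal, symOuter, outer, nb12, nb21, nb13,
      nb31, nb23, nb32, v3, Matrix.smul_apply, Matrix.diagonal, Matrix.of_apply] <;>
    nlinarith [sqrt2_mul]

lemma Lcase5 : (3 : ℝ)⁻¹ • strains 2 + (2 / 3 : ℝ) • strains 0 =
    ((2 : ℝ) * 1) • symOuter (twinNormal 0 1) (twinNormal 1 0) := by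
  ext i j
  fin_cases i <;> fin_cases j <;>
    simp [strains, em1, em2, em3, twinNormal, symOuter, outer, nb12, nb21, nb13,
      nb31, nb23, nb32, v3, Matrix.smul_apply, Matrix.diagonal, Matrix.of_apply] <;>
    nlinarith [sqrt2_mul]

/-- the habit-plane relation. For every permutation `(i,j,k)` of `(1,2,3)`
with signature `ε`, one has `(1/3) e⁽ⁱ⁾ + (2/3) e⁽ʲ⁾ = 2 ε (b_{jk} ⊙ b_{kj})`; i.e. this
convex combination of two distinct variant strains is a symmetrized rank-one matrix,
hence compatible with the austenite strain `e⁽⁰⁾ = 0`. -/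
theorem habit_plane_relation :
    (∀ σ : Equiv.Perm (Fin 3),
      (3 : ℝ)⁻¹ • strains (σ 0) + (2 / 3 : ℝ) • strains (σ 1) =
        ((2 : ℝ) * ((Equiv.Perm.sign σ : ℤ) : ℝ)) •
          symOuter (twinNormal (σ 1) (σ 2)) (twinNormal (σ 2) (σ 1))) ∧
    ∀ i j : Fin 3, i ≠ j → ∃ u v : E3,
      (3 : ℝ)⁻¹ • strains i + (2 / 3 : ℝ) • strains j = symOuter u v := by
  have key : ∀ σ : Equiv.Perm (Fin 3),
      (3 : ℝ)⁻¹ • strains (σ 0) + (2 / 3 : ℝ) • strains (σ 1) =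
        ((2 : ℝ) * ((Equiv.Perm.sign σ : ℤ) : ℝ)) •
          symOuter (twinNormal (σ 1) (σ 2)) (twinNormal (σ 2) (σ 1)) := by
    intro σ
    rcases perm3_cases σ with h | h | h | h | h | h
    · subst h
      rw [show ((1 : Equiv.Perm (Fin 3)) 0) = 0 from by decide, show ((1 : Equiv.Perm (Fin 3)) 1) = 1 from by decide,
        show ((1 : Equiv.Perm (Fin 3)) 2) = 2 from by decide,
        show ((Equiv.Perm.sign (1 : Equiv.Perm (Fin 3)) : ℤ) : ℝ) = 1 from by
          rw [show Equiv.Perm.sign (1 : Equiv.Perm (Fin 3)) = 1 from by decide]; norm_num]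
      exact Lcase0
    · subst h
      rw [show ((Equiv.swap 0 1 : Equiv.Perm (Fin 3)) 0) = 1 from by decide, show ((Equiv.swap 0 1 : Equiv.Perm (Fin 3)) 1) = 0 from by decide,
        show ((Equiv.swap 0 1 : Equiv.Perm (Fin 3)) 2) = 2 from by decide,
        show ((Equiv.Perm.sign (Equiv.swap 0 1 : Equiv.Perm (Fin 3)) : ℤ) : ℝ) = (-1) from by
          rw [show Equiv.Perm.sign (Equiv.swap 0 1 : Equiv.Perm (Fin 3)) = -1 from by decide]; norm_num]
      exact Lcase1
    · subst h
      rw [show ((Equiv.swap 0 2 : Equiv.Perm (Fin 3)) 0) = 2 from by decide, show ((Equiv.swap 0 2 : Equiv.Perm (Fin 3)) 1) = 1 from by decide,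
        show ((Equiv.swap 0 2 : Equiv.Perm (Fin 3)) 2) = 0 from by decide,
        show ((Equiv.Perm.sign (Equiv.swap 0 2 : Equiv.Perm (Fin 3)) : ℤ) : ℝ) = (-1) from by
          rw [show Equiv.Perm.sign (Equiv.swap 0 2 : Equiv.Perm (Fin 3)) = -1 from by decide]; norm_num]
      exact Lcase2
    · subst h
      rw [show ((Equiv.swap 1 2 : Equiv.Perm (Fin 3)) 0) = 0 from by decide, show ((Equiv.swap 1 2 : Equiv.Perm (Fin 3)) 1) = 2 from by decide,
        show ((Equiv.swap 1 2 : Equiv.Perm (Fin 3)) 2) = 1 from by decide,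
        show ((Equiv.Perm.sign (Equiv.swap 1 2 : Equiv.Perm (Fin 3)) : ℤ) : ℝ) = (-1) from by
          rw [show Equiv.Perm.sign (Equiv.swap 1 2 : Equiv.Perm (Fin 3)) = -1 from by decide]; norm_num]
      exact Lcase3
    · subst h
      rw [show ((Equiv.swap 0 1 * Equiv.swap 1 2 : Equiv.Perm (Fin 3)) 0) = 1 from by decide, show ((Equiv.swap 0 1 * Equiv.swap 1 2 : Equiv.Perm (Fin 3)) 1) = 2 from by decide,
        show ((Equiv.swap 0 1 * Equiv.swap 1 2 : Equiv.Perm (Fin 3)) 2) = 0 from by decide,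
        show ((Equiv.Perm.sign (Equiv.swap 0 1 * Equiv.swap 1 2 : Equiv.Perm (Fin 3)) : ℤ) : ℝ) = 1 from by
          rw [show Equiv.Perm.sign (Equiv.swap 0 1 * Equiv.swap 1 2 : Equiv.Perm (Fin 3)) = 1 from by decide]; norm_num]
      exact Lcase4
    · subst h
      rw [show ((Equiv.swap 0 2 * Equiv.swap 1 2 : Equiv.Perm (Fin 3)) 0) = 2 from by decide, show ((Equiv.swap 0 2 * Equiv.swap 1 2 : Equiv.Perm (Fin 3)) 1) = 0 from by decide,
        show ((Equiv.swap 0 2 * Equiv.swap 1 2 : Equiv.Perm (Fin 3)) 2) = 1 from by decide,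
        show ((Equiv.Perm.sign (Equiv.swap 0 2 * Equiv.swap 1 2 : Equiv.Perm (Fin 3)) : ℤ) : ℝ) = 1 from by
          rw [show Equiv.Perm.sign (Equiv.swap 0 2 * Equiv.swap 1 2 : Equiv.Perm (Fin 3)) = 1 from by decide]; norm_num]
      exact Lcase5
  refine ⟨key, fun i j hij => ?_⟩
  have hσ : ∃ σ : Equiv.Perm (Fin 3), σ 0 = i ∧ σ 1 = j := by
    revert hij; revert i j; decide
  obtain ⟨σ, h0, h1⟩ := hσ
  refine ⟨((2 : ℝ) * ((Equiv.Perm.sign σ : ℤ) : ℝ)) • twinNormal (σ 1) (σ 2),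
    twinNormal (σ 2) (σ 1), ?_⟩
  rw [symOuter_smul_left, ← h0, ← h1, key σ]

end
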